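/- Let R be a local commutative ring which is a valuation ring (not a field) such that there exists a nonzero non-unit a ∈ R with (0 : a) nonzero and finitely generated. Then for every r ∈ R the annihilator (0 : r) is a principal ideal. -/
import Mathlib

section Aux

variable {R : Type*} [CommRing R] [IsLocalRing R]

/-- If `q = s * y` with `q ≠ 0` and divisibility is total, then anything killing `s`
is divisible by `y`. -/
lemma aux_sub (hdvd : ∀ x y : R, x ∣ y ∨ y ∣ x) {q s y : R} (hq : q ≠ 0)
    (hsy : q = s * y) {w : R} (hw : w * s = 0) : y ∣ w := by
  rcases hdvd w y with ⟨v, hv⟩ | h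
  · exfalso
    apply hq
    rw [hsy, hv]
    linear_combination v * hw
  · exact h

/-- Duality of annihilators: if `(0:a) ⊆ (b)` with `a*b = 0`, `a ≠ 0 ≠ b`,
then `(0:b) ⊆ (a)`. -/
lemma aux_annb (hdvd : ∀ x y : R, x ∣ y ∨ y ∣ x) {a b : R} (ha : a ≠ 0) (hb : b ≠ 0)
    (hab : a * b = 0) (hann : ∀ x : R, x * a = 0 → b ∣ x) :
    ∀ x : R, x * b = 0 → a ∣ x := by
  intro x hx
  rcases hdvd a x with h | ⟨t, hat⟩
  · exact h
  by_cases ht : IsUnit t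
  · obtain ⟨u, hu⟩ := ht
    refine ⟨(↑u⁻¹ : R), ?_⟩
    rw [hat, ← hu, mul_assoc, Units.mul_inv, mul_one]
  · rcases hdvd t b with ⟨y0, hy0⟩ | ⟨m, hm⟩
    · -- b = t * y0
      have h1 : y0 * a = 0 := by
        rw [hat]; linear_combination hx - x * hy0
      obtain ⟨w, hw⟩ := hann y0 h1
      have hbz : b * (1 - t * w) = 0 := by
        linear_combination hy0 + t * hw
      have hunit : IsUnit (1 - t * w) := by
        apply IsLocalRing.isUnit_one_sub_self_of_mem_nonunits
        intro h
        exact ht (isUnit_of_mul_isUnit_left h)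
      exact absurd (hunit.mul_left_eq_zero.mp hbz) hb
    · -- t = b * m, so a = x * b * m = 0
      exfalso
      apply ha
      rw [hat, hm]
      linear_combination m * hx

/-- Key computation: if `p * q = 0`, `(0:p) ⊆ (q)`, `q = s * y ≠ 0`, then
`(0 : p*s) = (y)`. -/
lemma aux_key (hdvd : ∀ x y : R, x ∣ y ∨ y ∣ x) {p q s y : R} (hq : q ≠ 0)
    (hpq : p * q = 0) (hann : ∀ x : R, x * p = 0 → q ∣ x) (hsy : q = s * y) :
    ∀ x : R, x * (p * s) = 0 ↔ y ∣ x := by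
  intro x
  constructor
  · intro hx
    have h1 : (x * s) * p = 0 := by linear_combination hx
    obtain ⟨z, hz⟩ := hann _ h1
    have h2 : (x - y * z) * s = 0 := by
      linear_combination hz + z * hsy
    obtain ⟨w, hw⟩ := aux_sub hdvd hq hsy h2
    exact ⟨z + w, by linear_combination hw⟩
  · rintro ⟨u, rfl⟩
    linear_combination u * hpq - u * p * hsy

/-- The remaining case: `b = r * d`, then `(0 : r) = (a*d)`. -/
lemma aux_2b (hdvd : ∀ x y : R, x ∣ y ∨ y ∣ x) {a b r d : R} (ha : a ≠ 0) (hb : b ≠ 0)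
    (hab : a * b = 0) (hann : ∀ x : R, x * a = 0 → b ∣ x) (hrd : b = r * d) :
    ∀ x : R, x * r = 0 ↔ a * d ∣ x := by
  have hannb := aux_annb hdvd ha hb hab hann
  intro x
  constructor
  · intro hx
    have hxb : x * b = 0 := by rw [hrd]; linear_combination d * hx
    obtain ⟨x1, hx1⟩ := hannb x hxb
    -- x = a * x1
    have h1 : (x1 * r) * a = 0 := by linear_combination hx - r * hx1
    obtain ⟨z, hz⟩ := hann _ h1
    -- x1 * r = b * z
    rcases hdvd x1 d with ⟨e, he⟩ | ⟨w, hw⟩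
    · -- d = x1 * e
      have hbze : b * (1 - z * e) = 0 := by
        linear_combination hrd + r * he + e * hz
      by_cases hze : IsUnit (z * e)
      · obtain ⟨u, hu⟩ := isUnit_of_mul_isUnit_right hze
        refine ⟨(↑u⁻¹ : R), ?_⟩
        rw [hx1, he, ← hu, mul_assoc, mul_assoc, Units.mul_inv, mul_one]
      · have hunit : IsUnit (1 - z * e) :=
          IsLocalRing.isUnit_one_sub_self_of_mem_nonunits _ hze
        exact absurd (hunit.mul_left_eq_zero.mp hbze) hb
    · -- x1 = d * w
      exact ⟨w, by rw [hx1, hw]; ring⟩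
  · rintro ⟨u, rfl⟩
    linear_combination u * hab - u * a * hrd

end Aux

/-- Let `R` be a local valuation ring (ideals totally ordered) which is not a field,
and suppose some nonzero non-unit `a` has nonzero finitely generated annihilator.
Then the annihilator of every element of `R` is a principal ideal. -/
theorem stmt_16 {R : Type*} [CommRing R] [IsLocalRing R]
    (hval : ∀ I J : Ideal R, I ≤ J ∨ J ≤ I) (hnf : ¬IsField R)
    (a : R) (ha0 : a ≠ 0) (hau : ¬IsUnit a)
    (hann0 : (Ideal.span ({a} : Set R)).annihilator ≠ ⊥)
    (hannfg : (Ideal.span ({a} : Set R)).annihilator.FG) :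
    ∀ r : R, ((Ideal.span ({r} : Set R)).annihilator).IsPrincipal := by
  -- divisibility is total
  have hdvd : ∀ x y : R, x ∣ y ∨ y ∣ x := by
    intro x y
    rcases hval (Ideal.span {x}) (Ideal.span {y}) with h | h
    · exact Or.inr (Ideal.span_singleton_le_span_singleton.mp h)
    · exact Or.inl (Ideal.span_singleton_le_span_singleton.mp h)
  -- every f.g. ideal is principal
  have hspan : ∀ S : Finset R, (Ideal.span (S : Set R)).IsPrincipal := by
    intro S
    classical
    induction S using Finset.induction_on with
    | empty => exact ⟨0, by rw [Finset.coe_empty, Ideal.span_empty, Ideal.submodule_span_eq,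
        Ideal.span_singleton_eq_bot.mpr rfl]⟩
    | @insert x S' hx ih =>
      obtain ⟨y, hy⟩ := ih
      rw [Finset.coe_insert, Ideal.span_insert, hy, Ideal.submodule_span_eq]
      rcases hdvd x y with h | h
      · exact ⟨x, by rw [sup_eq_left.mpr (Ideal.span_singleton_le_span_singleton.mpr h), Ideal.submodule_span_eq]⟩
      · exact ⟨y, by rw [sup_eq_right.mpr (Ideal.span_singleton_le_span_singleton.mpr h), Ideal.submodule_span_eq]⟩
  have hprin : ∀ I : Ideal R, I.FG → I.IsPrincipal := by
    intro I hI
    obtain ⟨S, hS⟩ := hI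
    rw [← hS]
    exact hspan S
  -- get the generator b of (0 : a)
  obtain ⟨b, hb⟩ := hprin _ hannfg
  have hb0 : b ≠ 0 := by
    intro h
    apply hann0
    rw [hb, h, Ideal.submodule_span_eq, Ideal.span_singleton_eq_bot.mpr rfl]
  have hmem : ∀ x : R, x ∈ (Ideal.span ({a} : Set R)).annihilator ↔ x * a = 0 := by
    intro x
    rw [show (Ideal.span ({a} : Set R)) = Submodule.span R {a} from rfl,
      Submodule.mem_annihilator_span_singleton, smul_eq_mul]
  have hab : a * b = 0 := by
    have : b ∈ (Ideal.span ({a} : Set R)).annihilator := by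
      rw [hb, Ideal.submodule_span_eq]; exact Ideal.mem_span_singleton_self b
    rw [hmem] at this
    linear_combination this
  have hann : ∀ x : R, x * a = 0 → b ∣ x := by
    intro x hx
    have : x ∈ (Ideal.span ({a} : Set R)).annihilator := (hmem x).mpr hx
    rw [hb, Ideal.submodule_span_eq, Ideal.mem_span_singleton] at this
    exact this
  have hmemr : ∀ r x : R, x ∈ (Ideal.span ({r} : Set R)).annihilator ↔ x * r = 0 := by
    intro r x
    rw [show (Ideal.span ({r} : Set R)) = Submodule.span R {r} from rfl,
      Submodule.mem_annihilator_span_singleton, smul_eq_mul]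
  intro r
  by_cases hr0 : r = 0
  · refine ⟨1, ?_⟩
    ext x
    rw [hmemr, hr0, mul_zero, Ideal.submodule_span_eq, Ideal.span_singleton_one]
    simp
  rcases hdvd a r with ⟨s, hs⟩ | ⟨c, hc⟩
  · -- r = a * s
    rcases hdvd s b with ⟨y, hy⟩ | ⟨t, ht⟩
    · -- b = s * y
      refine ⟨y, ?_⟩
      ext x
      rw [hmemr, Ideal.submodule_span_eq, Ideal.mem_span_singleton, hs]
      exact aux_key hdvd hb0 hab hann hy x
    · -- s = b * t, so r = 0, contradiction
      exfalso
      apply hr0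
      rw [hs, ht]
      linear_combination t * hab
  · -- a = r * c
    rcases hdvd r b with ⟨d, hd⟩ | ⟨s, hs⟩
    · -- b = r * d
      refine ⟨a * d, ?_⟩
      ext x
      rw [hmemr, Ideal.submodule_span_eq, Ideal.mem_span_singleton]
      exact aux_2b hdvd ha0 hb0 hab hann hd x
    · -- r = b * s
      rcases hdvd s a with ⟨y, hy⟩ | ⟨t, ht⟩
      · -- a = s * y
        refine ⟨y, ?_⟩
        ext x
        rw [hmemr, Ideal.submodule_span_eq, Ideal.mem_span_singleton, hs]
        have hba : b * a = 0 := by linear_combination hab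
        exact aux_key hdvd ha0 hba (aux_annb hdvd ha0 hb0 hab hann) hy x
      · -- s = a * t, so r = 0, contradiction
        exfalso
        apply hr0
        rw [hs, ht]
        linear_combination t * hab
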